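/- Let m be odd, p an odd prime coprime to 2m with multiplicative order f modulo 2m, and suppose 2 ≡ p^j (mod m) for some j. Then for every divisor m' of m, there exists j' with 2 ≡ p^{j'} (mod m'); consequently Σ_{i=0}^{f'-1}[t p^i]_{2m'} = f'·m' for all t coprime to 2m', where f' is the order of p mod 2m'. -/

import Mathlib

open Finset

private lemma shift_one_sum (b : ℕ → ℤ) (N : ℕ) (hper : ∀ i, b (i + N) = b i) :
    ∑ i ∈ Finset.range N, b (i + 1) = ∑ i ∈ Finset.range N, b i := by
  have h1 := Finset.sum_range_succ' b N
  have h2 := Finset.sum_range_succ b N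
  have h3 : b N = b 0 := by simpa using hper 0
  linarith

private lemma shift_sum (b : ℕ → ℤ) (N : ℕ) (hper : ∀ i, b (i + N) = b i) (k : ℕ) :
    ∑ i ∈ Finset.range N, b (i + k) = ∑ i ∈ Finset.range N, b i := by
  induction k with
  | zero => simp
  | succ k ih =>
    have hper' : ∀ i, (fun l => b (l + k)) (i + N) = (fun l => b (l + k)) i := by
      intro i
      simp only
      rw [show i + N + k = (i + k) + N by omega, hper]
    calc ∑ i ∈ Finset.range N, b (i + (k + 1))
        = ∑ i ∈ Finset.range N, (fun l => b (l + k)) (i + 1) := by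
          refine Finset.sum_congr rfl fun i _ => ?_
          exact congrArg b (by omega)
      _ = ∑ i ∈ Finset.range N, b (i + k) := shift_one_sum (fun l => b (l + k)) N hper'
      _ = ∑ i ∈ Finset.range N, b i := ih

/-- If `2 ∈ ⟨p⟩ (mod m)` with `m` odd, then `2 ∈ ⟨p⟩ (mod m')` for every divisor `m'` of
`m`, and consequently the Gauss sums of order `2m'` are pure (Stickelberger criterion). -/
theorem stmt_17 (p m : ℕ) (hp : p.Prime) (hp2 : p ≠ 2) (hm : Odd m)
    (hcop : Nat.Coprime p (2 * m))
    (f : ℕ) (hf : f = orderOf ((p : ZMod (2 * m))))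
    (j : ℕ) (hj : ((p : ZMod m)) ^ j = 2) :
    ∀ m' : ℕ, m' ∣ m →
      (∃ j' : ℕ, ((p : ZMod m')) ^ j' = 2) ∧
      (∀ t : ℤ, Int.gcd t (2 * m') = 1 →
        ∑ i ∈ Finset.range (orderOf ((p : ZMod (2 * m')))),
          (t * (p : ℤ) ^ i) % (2 * m') = (orderOf ((p : ZMod (2 * m'))) : ℤ) * m') := by
  intro m' hm'
  have hm0 : 0 < m := hm.pos
  have hm'0 : 0 < m' := Nat.pos_of_dvd_of_pos hm' hm0
  have hm'odd : m' % 2 = 1 := by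
    rcases Nat.even_or_odd m' with he | ho
    · have h2 : 2 ∣ m := dvd_trans he.two_dvd hm'
      have hm1 := Nat.odd_iff.mp hm
      omega
    · exact Nat.odd_iff.mp ho
  have hjm' : ((p : ZMod m')) ^ j = 2 := by
    have h := congrArg (ZMod.castHom hm' (ZMod m')) hj
    rw [map_pow, map_natCast, map_ofNat] at h
    exact h
  refine ⟨⟨j, hjm'⟩, ?_⟩
  intro t ht
  set F := orderOf ((p : ZMod (2 * m'))) with hFdef
  have hp2' : p % 2 = 1 := Nat.odd_iff.mp (hp.odd_of_ne_two hp2)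
  have ht2 : t % 2 = 1 := by
    by_contra h
    have h2t : (2 : ℤ) ∣ t := by omega
    have hdvd : (2 : ℤ) ∣ (Int.gcd t (2 * m') : ℤ) :=
      Int.dvd_coe_gcd h2t ⟨(m' : ℤ), by push_cast; ring⟩
    rw [ht] at hdvd
    omega
  obtain ⟨c, hc⟩ : ∃ c : ℤ, 2 * c = (m' : ℤ) + 1 := ⟨((m' : ℤ) + 1) / 2, by omega⟩
  have hmz : (0 : ℤ) < (m' : ℤ) := by exact_mod_cast hm'0
  have hpk : ((p : ℤ)) ^ j ≡ 2 [ZMOD (m' : ℤ)] := by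
    have h1 : (((p : ℤ) ^ j : ℤ) : ZMod m') = ((2 : ℤ) : ZMod m') := by
      push_cast
      exact_mod_cast hjm'
    exact (ZMod.intCast_eq_intCast_iff _ _ _).mp h1
  have hpF : ((p : ℤ)) ^ F ≡ 1 [ZMOD ((m' : ℤ))] := by
    have h1 : ((p : ZMod (2 * m'))) ^ F = 1 := pow_orderOf_eq_one _
    have h2 : (((p : ℤ) ^ F : ℤ) : ZMod (2 * m')) = ((1 : ℤ) : ZMod (2 * m')) := by
      push_cast
      exact_mod_cast h1
    have h3 : (p : ℤ) ^ F ≡ 1 [ZMOD ((2 * m' : ℕ) : ℤ)] :=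
      (ZMod.intCast_eq_intCast_iff _ _ _).mp h2
    have h4 : ((m' : ℤ)) ∣ ((2 * m' : ℕ) : ℤ) := ⟨2, by push_cast; ring⟩
    exact Int.ModEq.of_dvd h4 h3
  set a : ℕ → ℤ := fun i => (t * c * (p : ℤ) ^ i) % (m' : ℤ) with hadef
  have ha0 : ∀ i, 0 ≤ a i := fun i => Int.emod_nonneg _ (by omega)
  have halt : ∀ i, a i < (m' : ℤ) := fun i => Int.emod_lt_of_pos _ hmz
  have hper : ∀ i, a (i + F) = a i := by
    intro i
    show (t * c * (p : ℤ) ^ (i + F)) % (m' : ℤ) = (t * c * (p : ℤ) ^ i) % (m' : ℤ)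
    have h1 : t * c * (p : ℤ) ^ (i + F) ≡ t * c * ((p : ℤ) ^ i * 1) [ZMOD (m' : ℤ)] := by
      rw [pow_add]
      exact (hpF.mul_left ((p : ℤ) ^ i)).mul_left (t * c)
    rw [mul_one] at h1
    exact h1
  have hshift : ∀ i, a (i + j) = (2 * a i) % (m' : ℤ) := by
    intro i
    show (t * c * (p : ℤ) ^ (i + j)) % (m' : ℤ) = _
    have hx : (t * c * (p : ℤ) ^ i) % (m' : ℤ) ≡ t * c * (p : ℤ) ^ i [ZMOD (m' : ℤ)] :=
      Int.emod_emod_of_dvd _ dvd_rfl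
    calc (t * c * (p : ℤ) ^ (i + j)) % (m' : ℤ)
        = ((t * c * (p : ℤ) ^ i) * 2) % (m' : ℤ) := by
          have h1 : t * c * (p : ℤ) ^ (i + j) ≡ (t * c * (p : ℤ) ^ i) * 2 [ZMOD (m' : ℤ)] := by
            rw [pow_add, ← mul_assoc]
            exact hpk.mul_left _
          exact h1
      _ = (2 * (t * c * (p : ℤ) ^ i)) % (m' : ℤ) := by ring_nf
      _ = (2 * a i) % (m' : ℤ) := (hx.mul_left 2).symm
  have hval : ∀ i, (2 * a i) % (m' : ℤ)
      = 2 * a i - (if (m' : ℤ) < 2 * a i then (m' : ℤ) else 0) := by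
    intro i
    have h0 := ha0 i
    have h1 := halt i
    by_cases h : (m' : ℤ) < 2 * a i
    · rw [if_pos h]
      have h2 : (2 * a i - (m' : ℤ)) % (m' : ℤ) = (2 * a i) % (m' : ℤ) := by
        rw [Int.sub_emod, Int.emod_self, sub_zero, Int.emod_emod_of_dvd _ dvd_rfl]
      rw [← h2, Int.emod_eq_of_lt (by omega) (by omega)]
    · rw [if_neg h, sub_zero, Int.emod_eq_of_lt (by omega) (by omega)]
  set S := ∑ i ∈ Finset.range F, a i with hS
  set T := ∑ i ∈ Finset.range F, (if (m' : ℤ) < 2 * a i then (m' : ℤ) else 0) with hT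
  have hsum1 : ∑ i ∈ Finset.range F, a (i + j) = S := shift_sum a F hper j
  have hsum2 : ∑ i ∈ Finset.range F, a (i + j) = 2 * S - T := by
    calc ∑ i ∈ Finset.range F, a (i + j)
        = ∑ i ∈ Finset.range F,
            (2 * a i - (if (m' : ℤ) < 2 * a i then (m' : ℤ) else 0)) := by
          refine Finset.sum_congr rfl fun i _ => ?_
          rw [hshift i, hval i]
      _ = 2 * S - T := by rw [Finset.sum_sub_distrib, ← Finset.mul_sum]
  have hTS : T = S := by linarith [hsum1, hsum2]
  have hresid : ∀ i, (t * (p : ℤ) ^ i) % (2 * (m' : ℤ))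
      = (m' : ℤ) + 2 * a i - (if (m' : ℤ) < 2 * a i then 2 * (m' : ℤ) else 0) := by
    intro i
    set v := (m' : ℤ) + 2 * a i - (if (m' : ℤ) < 2 * a i then 2 * (m' : ℤ) else 0) with hv
    have h0 := ha0 i
    have h1 := halt i
    have hv0 : 0 ≤ v := by rw [hv]; split_ifs <;> omega
    have hv1 : v < 2 * (m' : ℤ) := by rw [hv]; split_ifs <;> omega
    have hmod2 : t * (p : ℤ) ^ i ≡ v [ZMOD 2] := by
      have hp2z : (p : ℤ) ≡ 1 [ZMOD 2] := by show (p : ℤ) % 2 = 1 % 2; omega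
      have htz : t ≡ 1 [ZMOD 2] := by show t % 2 = 1 % 2; omega
      have hvz : v ≡ 1 [ZMOD 2] := by
        show v % 2 = 1 % 2
        rw [hv]; split_ifs <;> omega
      calc t * (p : ℤ) ^ i ≡ 1 * 1 ^ i [ZMOD 2] := htz.mul (hp2z.pow i)
        _ = 1 := by ring
        _ ≡ v [ZMOD 2] := hvz.symm
    have hmodm : t * (p : ℤ) ^ i ≡ v [ZMOD (m' : ℤ)] := by
      have e1 : v ≡ 2 * a i [ZMOD (m' : ℤ)] := by
        rw [Int.modEq_iff_dvd]
        rw [hv]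
        split_ifs
        · exact ⟨1, by ring⟩
        · exact ⟨-1, by ring⟩
      have ex : (t * c * (p : ℤ) ^ i) % (m' : ℤ) ≡ t * c * (p : ℤ) ^ i [ZMOD (m' : ℤ)] :=
        Int.emod_emod_of_dvd _ dvd_rfl
      have e2 : 2 * a i ≡ 2 * (t * c * (p : ℤ) ^ i) [ZMOD (m' : ℤ)] := ex.mul_left 2
      have e3 : 2 * (t * c * (p : ℤ) ^ i) ≡ t * (p : ℤ) ^ i [ZMOD (m' : ℤ)] := by
        have em : ((m' : ℤ) + 1) ≡ 0 + 1 [ZMOD (m' : ℤ)] :=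
          Int.ModEq.add_right 1 ((Int.modEq_zero_iff_dvd).mpr dvd_rfl)
        calc 2 * (t * c * (p : ℤ) ^ i) = ((m' : ℤ) + 1) * (t * (p : ℤ) ^ i) := by
              rw [← hc]; ring
          _ ≡ (0 + 1) * (t * (p : ℤ) ^ i) [ZMOD (m' : ℤ)] := em.mul_right _
          _ = t * (p : ℤ) ^ i := by ring
      exact ((e1.trans e2).trans e3).symm
    have hcop2 : Nat.Coprime (Int.natAbs 2) (Int.natAbs (m' : ℤ)) := by
      show Nat.Coprime 2 m'
      have : Nat.gcd 2 m' = Nat.gcd (m' % 2) 2 := Nat.gcd_rec 2 m'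
      rw [hm'odd] at this
      simpa [Nat.Coprime] using this
    have hfin : t * (p : ℤ) ^ i ≡ v [ZMOD 2 * (m' : ℤ)] :=
      (Int.modEq_and_modEq_iff_modEq_mul hcop2).mp ⟨hmod2, hmodm⟩
    calc (t * (p : ℤ) ^ i) % (2 * (m' : ℤ)) = v % (2 * (m' : ℤ)) := hfin
      _ = v := Int.emod_eq_of_lt hv0 hv1
  calc ∑ i ∈ Finset.range F, (t * (p : ℤ) ^ i) % (2 * (m' : ℤ))
      = ∑ i ∈ Finset.range F,
          ((m' : ℤ) + 2 * a i - (if (m' : ℤ) < 2 * a i then 2 * (m' : ℤ) else 0)) :=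
        Finset.sum_congr rfl fun i _ => hresid i
    _ = (F : ℤ) * (m' : ℤ) := by
        rw [Finset.sum_sub_distrib, Finset.sum_add_distrib, Finset.sum_const,
          Finset.card_range]
        have h2T : ∑ i ∈ Finset.range F, (if (m' : ℤ) < 2 * a i then 2 * (m' : ℤ) else 0)
            = 2 * T := by
          rw [hT, Finset.mul_sum]
          refine Finset.sum_congr rfl fun i _ => ?_
          split_ifs <;> ring
        have h2S : ∑ i ∈ Finset.range F, 2 * a i = 2 * S := by rw [hS, Finset.mul_sum]
        rw [h2T, h2S, hTS, nsmul_eq_mul]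
        ring
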